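/- Let μ ∈ ℝ^p, let Σ ∈ ℝ^{p×p} be symmetric positive definite, and let q be the density of N(μ, Σ). Let M ∈ ℝ^{p×p} be symmetric and let S ∈ ℝ^{p×p} be a symmetric matrix solving the Sylvester equation SΣ + ΣS = M. Define Φ(x) := −(1/2)tr(SΣ) + (1/2)(x−μ)ᵀS(x−μ). Then: (i) E_q[Φ] = 0; and (ii) for all x ∈ ℝ^p, A(∇_x Φ)(x) = tr(S) − (x−μ)ᵀSΣ^{-1}(x−μ) = (1/2)tr(Σ^{-1}M) − (1/2)(x−μ)ᵀΣ^{-1}MΣ^{-1}(x−μ), which equals the negative of the directional derivative (d/dt)|_{t=0} log q_{μ,Σ+tM}(x) of the log-density in the covariance direction M. Hence Φ is the Wasserstein score function of the covariance parameter in direction M. -/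

import Mathlib

open MeasureTheory Real Matrix

/-- Partial derivative in the `i`-th coordinate. -/
noncomputable def pdv {n : ℕ} (i : Fin n) (f : (Fin n → ℝ) → ℝ) (x : Fin n → ℝ) : ℝ :=
  deriv (fun t => f (Function.update x i t)) (x i)

/-- Gradient of a scalar function on ℝ^n. -/
noncomputable def gradv {n : ℕ} (f : (Fin n → ℝ) → ℝ) (x : Fin n → ℝ) : Fin n → ℝ :=
  fun i => pdv i f x

/-- Divergence of a vector field on ℝ^n. -/
noncomputable def divv {n : ℕ} (f : (Fin n → ℝ) → (Fin n → ℝ)) (x : Fin n → ℝ) : ℝ :=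
  ∑ i, pdv i (fun y => f y i) x

/-- Divergence-based Stein operator `A_q f = div(q f) / q`. -/
noncomputable def stein {n : ℕ} (q : (Fin n → ℝ) → ℝ) (f : (Fin n → ℝ) → (Fin n → ℝ))
    (x : Fin n → ℝ) : ℝ :=
  divv (fun y i => q y * f y i) x / q x

/-- The density of the normal distribution `N(μ, Σ)` on ℝ^p. -/
noncomputable def gaussDens {p : ℕ} (μ : Fin p → ℝ) (Cov : Matrix (Fin p) (Fin p) ℝ)
    (x : Fin p → ℝ) : ℝ :=
  (2 * Real.pi) ^ (-(p : ℝ) / 2) * Cov.det ^ (-(1 : ℝ) / 2)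
    * Real.exp (-((x - μ) ⬝ᵥ (Cov⁻¹ *ᵥ (x - μ))) / 2)

section Aux
open Filter
variable {p : ℕ}
lemma update_eq (x : Fin p → ℝ) (i : Fin p) (t : ℝ) :
    Function.update x i t = x + (t - x i) • (Pi.single i 1 : Fin p → ℝ) := by
  funext j
  by_cases h : j = i
  · subst h; simp
  · simp [Function.update_apply, h, Pi.single_apply, Ne.symm h]

lemma quad_expand (A : Matrix (Fin p) (Fin p) ℝ) (v e : Fin p → ℝ) (s : ℝ) :
    (v + s • e) ⬝ᵥ A *ᵥ (v + s • e)
      = v ⬝ᵥ A *ᵥ v + s * (e ⬝ᵥ A *ᵥ v + v ⬝ᵥ A *ᵥ e) + s ^ 2 * (e ⬝ᵥ A *ᵥ e) := by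
  simp [Matrix.mulVec_add, Matrix.mulVec_smul, dotProduct_add, add_dotProduct,
    smul_dotProduct, dotProduct_smul, smul_eq_mul]
  ring

lemma hasDerivAt_quad (A : Matrix (Fin p) (Fin p) ℝ) (μ x : Fin p → ℝ) (i : Fin p) :
    HasDerivAt (fun t => (Function.update x i t - μ) ⬝ᵥ A *ᵥ (Function.update x i t - μ))
      ((A *ᵥ (x - μ)) i + (Aᵀ *ᵥ (x - μ)) i) (x i) := by
  set v := x - μ
  set e : Fin p → ℝ := Pi.single i 1 with he
  have hfun : (fun t => (Function.update x i t - μ) ⬝ᵥ A *ᵥ (Function.update x i t - μ))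
      = fun t => v ⬝ᵥ A *ᵥ v + (t - x i) * (e ⬝ᵥ A *ᵥ v + v ⬝ᵥ A *ᵥ e)
          + (t - x i) ^ 2 * (e ⬝ᵥ A *ᵥ e) := by
    funext t
    rw [update_eq x i t]
    have : x + (t - x i) • e - μ = v + (t - x i) • e := by
      simp [v]; abel
    rw [this, quad_expand]
  rw [hfun]
  have h1 : HasDerivAt (fun t : ℝ => t - x i) 1 (x i) := (hasDerivAt_id _).sub_const _
  have h := ((h1.mul_const (e ⬝ᵥ A *ᵥ v + v ⬝ᵥ A *ᵥ e)).const_add (v ⬝ᵥ A *ᵥ v)).add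
    ((h1.pow 2).mul_const (e ⬝ᵥ A *ᵥ e))
  simp only [sub_self] at h
  refine h.congr_deriv ?_
  have he1 : e ⬝ᵥ A *ᵥ v = (A *ᵥ v) i := by simp [e, single_dotProduct]
  have he2 : v ⬝ᵥ A *ᵥ e = (Aᵀ *ᵥ v) i := by
    rw [Matrix.dotProduct_mulVec, ← Matrix.mulVec_transpose, dotProduct_single]
    simp [Matrix.mulVec_single]
  rw [he1, he2]; ring

-- gradient of Phi
lemma gradv_phi (μ : Fin p → ℝ) (S : Matrix (Fin p) (Fin p) ℝ) (hS : S.IsSymm) (c : ℝ)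
    (y : Fin p → ℝ) :
    gradv (fun z => c + (1 / 2) * ((z - μ) ⬝ᵥ (S *ᵥ (z - μ)))) y = S *ᵥ (y - μ) := by
  funext i
  have h := ((hasDerivAt_quad S μ y i).const_mul (1/2 : ℝ)).const_add c
  rw [gradv, pdv, h.deriv, hS.eq]
  ring

-- derivative of density in one coordinate
lemma hasDerivAt_dens (μ : Fin p → ℝ) (Cov : Matrix (Fin p) (Fin p) ℝ)
    (hinvsym : (Cov⁻¹).IsSymm) (x : Fin p → ℝ) (i : Fin p) :
    HasDerivAt (fun t => gaussDens μ Cov (Function.update x i t))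
      (gaussDens μ Cov x * (-(Cov⁻¹ *ᵥ (x - μ)) i)) (x i) := by
  have hq := hasDerivAt_quad Cov⁻¹ μ x i
  rw [hinvsym.eq] at hq
  have h := (((hq.neg.div_const 2).exp).const_mul
    ((2 * Real.pi) ^ (-(p : ℝ) / 2) * Cov.det ^ (-(1 : ℝ) / 2)))
  have hfun : (fun t => gaussDens μ Cov (Function.update x i t))
      = fun t => (2 * Real.pi) ^ (-(p : ℝ) / 2) * Cov.det ^ (-(1 : ℝ) / 2) *
          Real.exp (-((Function.update x i t - μ) ⬝ᵥ (Cov⁻¹ *ᵥ (Function.update x i t - μ))) / 2) := by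
    funext t; rw [gaussDens]
  rw [hfun]
  simp only [Pi.neg_apply, Function.update_eq_self] at h
  refine h.congr_deriv ?_
  rw [gaussDens]
  ring

lemma gaussDens_pos (μ : Fin p → ℝ) (Cov : Matrix (Fin p) (Fin p) ℝ) (hCovpd : Cov.PosDef)
    (x : Fin p → ℝ) : 0 < gaussDens μ Cov x := by
  have h1 : (0:ℝ) < 2 * Real.pi := by positivity
  have h2 : (0:ℝ) < Cov.det := hCovpd.det_pos
  rw [gaussDens]
  positivity

lemma inv_isSymm (Cov : Matrix (Fin p) (Fin p) ℝ) (hCovsym : Cov.IsSymm) : (Cov⁻¹).IsSymm := by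
  rw [Matrix.IsSymm, Matrix.transpose_nonsing_inv, hCovsym.eq]

lemma stein_eq (μ : Fin p → ℝ) (Cov S : Matrix (Fin p) (Fin p) ℝ)
    (hCovsym : Cov.IsSymm) (hCovpd : Cov.PosDef) (hSsym : S.IsSymm) (x : Fin p → ℝ) :
    stein (gaussDens μ Cov)
        (fun y => gradv (fun z =>
          -(1 / 2) * (S * Cov).trace + (1 / 2) * ((z - μ) ⬝ᵥ (S *ᵥ (z - μ)))) y) x
      = S.trace - (x - μ) ⬝ᵥ ((S * Cov⁻¹) *ᵥ (x - μ)) := by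
  have hinvsym := inv_isSymm Cov hCovsym
  have hgrad : ∀ y, gradv (fun z =>
      -(1 / 2) * (S * Cov).trace + (1 / 2) * ((z - μ) ⬝ᵥ (S *ᵥ (z - μ)))) y = S *ᵥ (y - μ) :=
    fun y => gradv_phi μ S hSsym _ y
  have hq := gaussDens_pos μ Cov hCovpd
  rw [stein, divv]
  have hterm : ∀ i : Fin p,
      pdv i (fun y => gaussDens μ Cov y *
        gradv (fun z => -(1 / 2) * (S * Cov).trace + (1 / 2) * ((z - μ) ⬝ᵥ (S *ᵥ (z - μ)))) y i) x
      = gaussDens μ Cov x * (-(Cov⁻¹ *ᵥ (x - μ)) i * (S *ᵥ (x - μ)) i + S i i) := by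
    intro i
    have hfun : (fun y => gaussDens μ Cov y *
        gradv (fun z => -(1 / 2) * (S * Cov).trace + (1 / 2) * ((z - μ) ⬝ᵥ (S *ᵥ (z - μ)))) y i)
        = fun y => gaussDens μ Cov y * (S *ᵥ (y - μ)) i := by
      funext y; rw [hgrad y]
    rw [hfun, pdv]
    have hlin : HasDerivAt (fun t => (S *ᵥ (Function.update x i t - μ)) i) (S i i) (x i) := by
      have hf : (fun t => (S *ᵥ (Function.update x i t - μ)) i)
          = fun t => (S *ᵥ (x - μ)) i + (t - x i) * S i i := by
        funext t
        rw [update_eq x i t]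
        have : x + (t - x i) • (Pi.single i 1 : Fin p → ℝ) - μ
            = (x - μ) + (t - x i) • (Pi.single i 1 : Fin p → ℝ) := by abel
        rw [this, Matrix.mulVec_add, Matrix.mulVec_smul]
        simp [Matrix.mulVec_single]
      rw [hf]
      have h1 : HasDerivAt (fun t : ℝ => t - x i) 1 (x i) := (hasDerivAt_id _).sub_const _
      simpa using (h1.mul_const (S i i)).const_add ((S *ᵥ (x - μ)) i)
    have h := (hasDerivAt_dens μ Cov hinvsym x i).mul hlin
    rw [(show HasDerivAt (fun t => gaussDens μ Cov (Function.update x i t) * (S *ᵥ (Function.update x i t - μ)) i) _ (x i) from h).deriv]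
    simp only [Function.update_eq_self]
    ring
  rw [Finset.sum_congr rfl (fun i _ => hterm i)]
  rw [← Finset.mul_sum, mul_div_cancel_left₀ _ (ne_of_gt (hq x))]
  have : ∑ i, (-(Cov⁻¹ *ᵥ (x - μ)) i * (S *ᵥ (x - μ)) i + S i i)
      = S.trace - (Cov⁻¹ *ᵥ (x - μ)) ⬝ᵥ (S *ᵥ (x - μ)) := by
    rw [Finset.sum_add_distrib, Matrix.trace, dotProduct]
    simp [Matrix.diag]
    ring
  rw [this]
  congr 1
  rw [← Matrix.mulVec_mulVec, Matrix.dotProduct_mulVec, ← Matrix.mulVec_transpose, hSsym.eq,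
    dotProduct_comm]

lemma dot_self_transpose (A : Matrix (Fin p) (Fin p) ℝ) (v : Fin p → ℝ) :
    v ⬝ᵥ (Aᵀ *ᵥ v) = v ⬝ᵥ (A *ᵥ v) := by
  rw [Matrix.mulVec_transpose, Matrix.dotProduct_mulVec, dotProduct_comm]

lemma algebra_eq (Cov M S : Matrix (Fin p) (Fin p) ℝ)
    (hCovsym : Cov.IsSymm) (hCovpd : Cov.PosDef) (hSsym : S.IsSymm)
    (hSyl : S * Cov + Cov * S = M) (x μ : Fin p → ℝ) :
    S.trace - (x - μ) ⬝ᵥ ((S * Cov⁻¹) *ᵥ (x - μ))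
      = (1 / 2) * (Cov⁻¹ * M).trace
        - (1 / 2) * ((x - μ) ⬝ᵥ ((Cov⁻¹ * M * Cov⁻¹) *ᵥ (x - μ))) := by
  have hdet : Cov.det ≠ 0 := ne_of_gt hCovpd.det_pos
  have h1 : Cov * Cov⁻¹ = 1 := Matrix.mul_nonsing_inv Cov (isUnit_iff_ne_zero.mpr hdet)
  have h2 : Cov⁻¹ * Cov = 1 := Matrix.nonsing_inv_mul Cov (isUnit_iff_ne_zero.mpr hdet)
  have hinvsym := inv_isSymm Cov hCovsym
  set v := x - μ
  have htr : (Cov⁻¹ * M).trace = S.trace + S.trace := by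
    rw [← hSyl, Matrix.mul_add, Matrix.trace_add, ← Matrix.mul_assoc (Cov⁻¹) Cov S, h2,
      Matrix.one_mul, ← Matrix.mul_assoc, Matrix.trace_mul_cycle, h1, Matrix.one_mul]
  have hquad : Cov⁻¹ * M * Cov⁻¹ = Cov⁻¹ * S + S * Cov⁻¹ := by
    rw [← hSyl, Matrix.mul_add, Matrix.add_mul]
    congr 1
    · rw [← Matrix.mul_assoc, Matrix.mul_assoc (Cov⁻¹ * S), h1, Matrix.mul_one]
    · rw [← Matrix.mul_assoc, h2, Matrix.one_mul]
  have hsw : v ⬝ᵥ ((Cov⁻¹ * S) *ᵥ v) = v ⬝ᵥ ((S * Cov⁻¹) *ᵥ v) := by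
    have : (S * Cov⁻¹)ᵀ = Cov⁻¹ * S := by
      rw [Matrix.transpose_mul, hinvsym.eq, hSsym.eq]
    rw [← this, dot_self_transpose]
  rw [htr, hquad, Matrix.add_mulVec, dotProduct_add, hsw]
  ring

variable {p : ℕ}

section DetDeriv

lemma hasDerivAt_det_line (Cov M : Matrix (Fin p) (Fin p) ℝ) (hdet : IsUnit Cov.det) :
    HasDerivAt (fun t : ℝ => (Cov + t • M).det) (Cov.det * (Cov⁻¹ * M).trace) 0 := by
  have hfac : ∀ t : ℝ, Cov + t • M = Cov * (1 + t • (Cov⁻¹ * M)) := by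
    intro t
    rw [Matrix.mul_add, Matrix.mul_one, Matrix.mul_smul, ← Matrix.mul_assoc,
      Matrix.mul_nonsing_inv Cov hdet, Matrix.one_mul]
  have hfun : (fun t : ℝ => (Cov + t • M).det)
      = fun t : ℝ => Cov.det * (1 + (Cov⁻¹ * M).trace * t
          + ((1 + (Polynomial.X : Polynomial ℝ) • (Cov⁻¹ * M).map Polynomial.C).det).divX.divX.eval t
            * t ^ 2) := by
    funext t
    rw [hfac t, Matrix.det_mul, Matrix.det_one_add_smul]
  rw [hfun]
  set Q := ((1 + (Polynomial.X : Polynomial ℝ) • (Cov⁻¹ * M).map Polynomial.C).det).divX.divX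
  have h1 : HasDerivAt (fun t : ℝ => (Cov⁻¹ * M).trace * t) ((Cov⁻¹ * M).trace) 0 := by
    simpa using (hasDerivAt_id (0:ℝ)).const_mul ((Cov⁻¹ * M).trace)
  have h2 : HasDerivAt (fun t : ℝ => Q.eval t * t ^ 2) 0 0 := by
    have := (Q.hasDerivAt 0).mul (hasDerivAt_pow 2 0)
    simpa [Pi.mul_def] using this
  have h := ((h1.const_add 1).add h2).const_mul Cov.det
  simpa using h

end DetDeriv

section InvDeriv

attribute [local instance] Matrix.linftyOpNormedAddCommGroup Matrix.linftyOpNormedRing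
  Matrix.linftyOpNormedAlgebra

lemma hasDerivAt_inv_line (Cov M : Matrix (Fin p) (Fin p) ℝ) (hdet : IsUnit Cov.det) :
    HasDerivAt (fun t : ℝ => (Cov + t • M)⁻¹) (-(Cov⁻¹ * M * Cov⁻¹)) 0 := by
  obtain ⟨u, hu⟩ := (Matrix.isUnit_iff_isUnit_det Cov).2 hdet
  have hline : HasDerivAt (fun t : ℝ => Cov + t • M) M 0 := by
    have := ((hasDerivAt_id (0:ℝ)).smul_const M).const_add Cov
    simp only [id, one_smul] at this
    exact this
  have h2 := hasFDerivAt_ringInverse (𝕜 := ℝ) u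
  rw [hu] at h2
  have h2' : HasFDerivAt Ring.inverse (-(ContinuousLinearMap.mulLeftRight ℝ _ ↑u⁻¹ ↑u⁻¹))
      ((fun t : ℝ => Cov + t • M) 0) := by simpa using h2
  have h3 := h2'.comp_hasDerivAt 0 hline
  have hcoe : (↑u⁻¹ : Matrix (Fin p) (Fin p) ℝ) = Cov⁻¹ := by
    rw [Matrix.coe_units_inv, hu]
  have hfun : (fun t : ℝ => (Cov + t • M)⁻¹) = fun t : ℝ => Ring.inverse (Cov + t • M) := by
    funext t; exact Matrix.nonsing_inv_eq_ringInverse _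
  rw [hfun]
  refine h3.congr_deriv ?_
  simp [ContinuousLinearMap.mulLeftRight_apply, hcoe]

lemma hasDerivAt_quadform_line (Cov M : Matrix (Fin p) (Fin p) ℝ) (hdet : IsUnit Cov.det)
    (v : Fin p → ℝ) :
    HasDerivAt (fun t : ℝ => v ⬝ᵥ ((Cov + t • M)⁻¹ *ᵥ v))
      (-(v ⬝ᵥ ((Cov⁻¹ * M * Cov⁻¹) *ᵥ v))) 0 := by
  let q : Matrix (Fin p) (Fin p) ℝ →ₗ[ℝ] ℝ :=
    { toFun := fun B => v ⬝ᵥ (B *ᵥ v)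
      map_add' := fun A B => by simp [Matrix.add_mulVec, dotProduct_add]
      map_smul' := fun c B => by simp [Matrix.smul_mulVec, dotProduct_smul] }
  have hq := (LinearMap.toContinuousLinearMap q).hasFDerivAt (x := Cov⁻¹)
  have h := (LinearMap.toContinuousLinearMap q).hasFDerivAt.comp_hasDerivAt 0
    (hasDerivAt_inv_line Cov M hdet)
  refine h.congr_deriv ?_
  change v ⬝ᵥ ((-(Cov⁻¹ * M * Cov⁻¹)) *ᵥ v) = _
  rw [Matrix.neg_mulVec, dotProduct_neg]

end InvDeriv

lemma deriv_log_gauss (μ : Fin p → ℝ) (Cov M : Matrix (Fin p) (Fin p) ℝ)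
    (hCovpd : Cov.PosDef) (x : Fin p → ℝ) :
    (1 / 2) * (Cov⁻¹ * M).trace
        - (1 / 2) * ((x - μ) ⬝ᵥ ((Cov⁻¹ * M * Cov⁻¹) *ᵥ (x - μ)))
      = - deriv (fun t : ℝ => Real.log (gaussDens μ (Cov + t • M) x)) 0 := by
  have hdet : IsUnit Cov.det := isUnit_iff_ne_zero.2 (ne_of_gt hCovpd.det_pos)
  set v := x - μ with hv
  set G : ℝ → ℝ := fun t => Real.log ((2 * Real.pi) ^ (-(p : ℝ) / 2))
      + (-(1:ℝ) / 2) * Real.log ((Cov + t • M).det)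
      + (-(v ⬝ᵥ ((Cov + t • M)⁻¹ *ᵥ v)) / 2) with hG
  have hd := hasDerivAt_det_line Cov M hdet
  have hev : ∀ᶠ t : ℝ in nhds 0, 0 < (Cov + t • M).det := by
    have hc : ContinuousAt (fun t : ℝ => (Cov + t • M).det) 0 := hd.continuousAt
    have h0 : (0:ℝ) < (Cov + (0:ℝ) • M).det := by simpa using hCovpd.det_pos
    exact hc.eventually (eventually_gt_nhds h0)
  have heq : (fun t : ℝ => Real.log (gaussDens μ (Cov + t • M) x)) =ᶠ[nhds 0] G := by
    filter_upwards [hev] with t ht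
    have hC : (0:ℝ) < (2 * Real.pi) ^ (-(p : ℝ) / 2) := by
      have : (0:ℝ) < 2 * Real.pi := by positivity
      positivity
    have hpow : (0:ℝ) < (Cov + t • M).det ^ (-(1:ℝ) / 2) := Real.rpow_pos_of_pos ht _
    rw [gaussDens, hG]
    rw [Real.log_mul (by positivity) (Real.exp_ne_zero _), Real.log_mul (ne_of_gt hC)
      (ne_of_gt hpow), Real.log_exp, Real.log_rpow ht]
  rw [heq.deriv_eq]
  have hne : (Cov + (0:ℝ) • M).det ≠ 0 := by simpa using ne_of_gt hCovpd.det_pos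
  have hlog := hd.log hne
  have hquad := hasDerivAt_quadform_line Cov M hdet v
  have hGd := ((hlog.const_mul (-(1:ℝ)/2)).const_add
      (Real.log ((2 * Real.pi) ^ (-(p : ℝ) / 2)))).add (hquad.neg.div_const 2)
  rw [(show HasDerivAt G _ 0 from hGd).deriv]
  have h0 : (Cov + (0:ℝ) • M).det = Cov.det := by simp
  rw [h0]
  have hne' : Cov.det ≠ 0 := ne_of_gt hCovpd.det_pos
  field_simp
  ring


open Filter

lemma fun_eq0 : (fun t : ℝ => Real.exp (-(1/2) * t ^ 2)) = fun t : ℝ => Real.exp (-(t * t) / 2) := by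
  funext t; congr 1; ring

lemma fun_eq1 : (fun t : ℝ => t * Real.exp (-(1/2) * t ^ 2))
    = fun t : ℝ => t * Real.exp (-(t * t) / 2) := by
  funext t; congr 2; ring

lemma fun_eq2 : (fun t : ℝ => t ^ (2:ℝ) * Real.exp (-(1/2) * t ^ 2))
    = fun t : ℝ => t * t * Real.exp (-(t * t) / 2) := by
  funext t
  rw [show (2:ℝ) = ((2:ℕ):ℝ) by norm_num, Real.rpow_natCast]
  congr 1
  · ring
  · congr 1; ring

lemma int0 : Integrable (fun t : ℝ => Real.exp (-(t * t) / 2)) := by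
  rw [← fun_eq0]; exact integrable_exp_neg_mul_sq (by norm_num)

lemma int1 : Integrable (fun t : ℝ => t * Real.exp (-(t * t) / 2)) := by
  rw [← fun_eq1]; exact integrable_mul_exp_neg_mul_sq (by norm_num)

lemma int2 : Integrable (fun t : ℝ => t * t * Real.exp (-(t * t) / 2)) := by
  rw [← fun_eq2]; exact integrable_rpow_mul_exp_neg_mul_sq (by norm_num) (by norm_num)

lemma val0 : ∫ t : ℝ, Real.exp (-(t * t) / 2) = Real.sqrt (2 * Real.pi) := by
  rw [← fun_eq0]
  rw [integral_gaussian]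
  rw [show π / (1/2) = 2 * π by ring]

lemma val1 : ∫ t : ℝ, t * Real.exp (-(t * t) / 2) = 0 := by
  have h := integral_neg_eq_self (fun t : ℝ => t * Real.exp (-(t * t) / 2)) volume
  have h2 : ∫ t : ℝ, (-t) * Real.exp (-((-t) * (-t)) / 2)
      = ∫ t : ℝ, t * Real.exp (-(t * t) / 2) := h
  have h3 : ∫ t : ℝ, (-t) * Real.exp (-((-t) * (-t)) / 2)
      = - ∫ t : ℝ, t * Real.exp (-(t * t) / 2) := by
    rw [← integral_neg]
    congr 1; funext t; rw [neg_mul_neg]; ring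
  linarith [h2, h3]

-- derivative of -t * exp(-(t*t)/2)
lemma hderiv (t : ℝ) : HasDerivAt (fun s : ℝ => -s * Real.exp (-(s * s) / 2))
    (t * t * Real.exp (-(t * t) / 2) - Real.exp (-(t * t) / 2)) t := by
  have h1 : HasDerivAt (fun s : ℝ => -(s * s) / 2) (-t) t := by
    have := ((hasDerivAt_id t).mul (hasDerivAt_id t)).neg.div_const 2
    simp only [id_eq] at this
    refine this.congr_deriv ?_; ring
  have h2 := h1.exp
  have h3 := ((hasDerivAt_id t).neg).mul h2
  simp only [Pi.neg_apply, id_eq] at h3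
  refine h3.congr_deriv ?_
  ring

lemma htend_top : Tendsto (fun s : ℝ => -s * Real.exp (-(s * s) / 2)) atTop (nhds 0) := by
  refine squeeze_zero_norm (fun s => ?_)
    ((tendsto_rpow_abs_mul_exp_neg_mul_sq_cocompact (by norm_num : (0:ℝ) < 1/2) 1).mono_left
      (le_sup_right.trans_eq cocompact_eq_atBot_atTop.symm))
  rw [Real.rpow_one, norm_mul, norm_neg, Real.norm_eq_abs, Real.norm_eq_abs, Real.abs_exp]
  have : -(1/2 : ℝ) * s ^ 2 = -(s * s) / 2 := by ring
  rw [this]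

lemma htend_bot : Tendsto (fun s : ℝ => -s * Real.exp (-(s * s) / 2)) atBot (nhds 0) := by
  refine squeeze_zero_norm (fun s => ?_)
    ((tendsto_rpow_abs_mul_exp_neg_mul_sq_cocompact (by norm_num : (0:ℝ) < 1/2) 1).mono_left
      (le_sup_left.trans_eq cocompact_eq_atBot_atTop.symm))
  rw [Real.rpow_one, norm_mul, norm_neg, Real.norm_eq_abs, Real.norm_eq_abs, Real.abs_exp]
  have : -(1/2 : ℝ) * s ^ 2 = -(s * s) / 2 := by ring
  rw [this]

lemma val2 : ∫ t : ℝ, t * t * Real.exp (-(t * t) / 2) = Real.sqrt (2 * Real.pi) := by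
  set f' : ℝ → ℝ := fun t => t * t * Real.exp (-(t * t) / 2) - Real.exp (-(t * t) / 2) with hf'
  have hint : Integrable f' := int2.sub int0
  have hIoi : ∫ t in Set.Ioi (0:ℝ), f' t = 0 := by
    rw [integral_Ioi_of_hasDerivAt_of_tendsto' (fun x _ => hderiv x)
      (hint.integrableOn) htend_top]
    simp
  have hIic : ∫ t in Set.Iic (0:ℝ), f' t = 0 := by
    rw [integral_Iic_of_hasDerivAt_of_tendsto' (fun x _ => hderiv x)
      (hint.integrableOn) htend_bot]
    simp
  have hsplit : ∫ t : ℝ, f' t = 0 := by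
    rw [← intervalIntegral.integral_Iic_add_Ioi (hint.integrableOn) (hint.integrableOn), hIic, hIoi, add_zero]
  have hsub := integral_sub int2 int0
  rw [hf'] at hsplit
  have hv0 := val0
  simp only at hsplit hsub
  rw [hsplit] at hsub
  linarith

variable {p : ℕ}

lemma prod_exp (u : Fin p → ℝ) :
    ∏ k, Real.exp (-(u k * u k) / 2) = Real.exp (-(u ⬝ᵥ u) / 2) := by
  rw [← Real.exp_sum]
  congr 1
  rw [dotProduct, ← Finset.sum_neg_distrib, Finset.sum_div]

noncomputable def gfun (i j k : Fin p) : ℝ → ℝ :=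
  fun t => (if k = i then t else 1) * ((if k = j then t else 1) * Real.exp (-(t * t) / 2))

lemma gfun_eq_both (i : Fin p) : gfun i i i = fun t => t * t * Real.exp (-(t * t) / 2) := by
  funext t; simp [gfun, mul_assoc]

lemma gfun_eq_left (i j : Fin p) (h : i ≠ j) :
    gfun i j i = fun t => t * Real.exp (-(t * t) / 2) := by
  funext t; simp [gfun, h]

lemma gfun_eq_right (i j : Fin p) (h : j ≠ i) :
    gfun i j j = fun t => t * Real.exp (-(t * t) / 2) := by
  funext t; simp [gfun, h]

lemma gfun_eq_none (i j k : Fin p) (h1 : k ≠ i) (h2 : k ≠ j) :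
    gfun i j k = fun t => Real.exp (-(t * t) / 2) := by
  funext t; simp [gfun, h1, h2]

lemma gfun_integrable (i j k : Fin p) : Integrable (gfun i j k) := by
  by_cases hi : k = i
  · subst hi
    by_cases hj : k = j
    · subst hj; rw [gfun_eq_both]; exact int2
    · rw [gfun_eq_left _ _ hj]; exact int1
  · by_cases hj : k = j
    · subst hj; rw [gfun_eq_right _ _ hi]; exact int1
    · rw [gfun_eq_none _ _ _ hi hj]; exact int0

lemma gfun_prod (i j : Fin p) (u : Fin p → ℝ) :
    ∏ k, gfun i j k (u k) = u i * u j * Real.exp (-(u ⬝ᵥ u) / 2) := by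
  unfold gfun
  rw [Finset.prod_mul_distrib, Finset.prod_mul_distrib, prod_exp]
  have ha : ∏ k, (if k = i then u k else 1) = u i := by simp
  have hb : ∏ k, (if k = j then u k else 1) = u j := by simp
  rw [ha, hb, mul_assoc]

lemma J_integrable (i j : Fin p) :
    Integrable (fun u : Fin p → ℝ => u i * u j * Real.exp (-(u ⬝ᵥ u) / 2)) := by
  have := Integrable.fintype_prod_dep (f := fun k => gfun i j k) (fun k => gfun_integrable i j k)
  exact this.congr (by filter_upwards with u; rw [gfun_prod])

lemma J_val (i j : Fin p) :
    ∫ u : Fin p → ℝ, u i * u j * Real.exp (-(u ⬝ᵥ u) / 2)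
      = if i = j then Real.sqrt (2 * Real.pi) ^ p else 0 := by
  have h1 : ∫ u : Fin p → ℝ, u i * u j * Real.exp (-(u ⬝ᵥ u) / 2)
      = ∏ k, ∫ t : ℝ, gfun i j k t := by
    rw [← MeasureTheory.integral_fintype_prod_eq_prod (f := fun k t => gfun i j k t)]
    congr 1; funext u; rw [gfun_prod]
  rw [h1]
  by_cases hij : i = j
  · subst hij
    rw [if_pos rfl]
    have hfac : ∀ k : Fin p, ∫ t : ℝ, gfun i i k t = Real.sqrt (2 * Real.pi) := by
      intro k
      by_cases hk : k = i
      · subst hk; rw [gfun_eq_both]; exact val2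
      · rw [gfun_eq_none _ _ _ hk hk]; exact val0
    rw [Finset.prod_congr rfl (fun k _ => hfac k), Finset.prod_const]
    simp
  · rw [if_neg hij]
    apply Finset.prod_eq_zero (Finset.mem_univ i)
    rw [gfun_eq_left _ _ hij]
    exact val1

lemma E_integrable : Integrable (fun u : Fin p → ℝ => Real.exp (-(u ⬝ᵥ u) / 2)) := by
  have := Integrable.fintype_prod_dep
    (f := fun _ : Fin p => fun t : ℝ => Real.exp (-(t * t) / 2)) (fun _ => int0)
  exact this.congr (by filter_upwards with u; rw [prod_exp])

lemma E_val : ∫ u : Fin p → ℝ, Real.exp (-(u ⬝ᵥ u) / 2) = Real.sqrt (2 * Real.pi) ^ p := by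
  have h := MeasureTheory.integral_fintype_prod_eq_pow (ι := Fin p) (μ := (volume : Measure ℝ))
    (fun t : ℝ => Real.exp (-(t * t) / 2))
  rw [val0, Fintype.card_fin] at h
  rw [← h]
  congr 1; funext u; rw [← prod_exp]

lemma gauss_moment (B : Matrix (Fin p) (Fin p) ℝ) :
    ∫ u : Fin p → ℝ, Real.exp (-(u ⬝ᵥ u) / 2) * (u ⬝ᵥ (B *ᵥ u) - B.trace) = 0 := by
  have hfun : ∀ u : Fin p → ℝ, Real.exp (-(u ⬝ᵥ u) / 2) * (u ⬝ᵥ (B *ᵥ u) - B.trace)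
      = (∑ i, ∑ j, B i j * (u i * u j * Real.exp (-(u ⬝ᵥ u) / 2)))
        - B.trace * Real.exp (-(u ⬝ᵥ u) / 2) := by
    intro u
    rw [mul_sub]
    congr 1
    · rw [dotProduct]
      simp only [Matrix.mulVec, dotProduct]
      rw [Finset.mul_sum]
      refine Finset.sum_congr rfl fun i _ => ?_
      rw [Finset.mul_sum, Finset.mul_sum]
      refine Finset.sum_congr rfl fun j _ => ?_
      ring
    · ring
  rw [show (fun u : Fin p → ℝ => Real.exp (-(u ⬝ᵥ u) / 2) * (u ⬝ᵥ (B *ᵥ u) - B.trace))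
    = fun u => (∑ i, ∑ j, B i j * (u i * u j * Real.exp (-(u ⬝ᵥ u) / 2)))
        - B.trace * Real.exp (-(u ⬝ᵥ u) / 2) from funext hfun]
  have hint1 : ∀ i j : Fin p,
      Integrable (fun u : Fin p → ℝ => B i j * (u i * u j * Real.exp (-(u ⬝ᵥ u) / 2))) :=
    fun i j => (J_integrable i j).const_mul _
  have hint2 : ∀ i : Fin p,
      Integrable (fun u : Fin p → ℝ => ∑ j, B i j * (u i * u j * Real.exp (-(u ⬝ᵥ u) / 2))) :=
    fun i => integrable_finset_sum _ (fun j _ => hint1 i j)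
  have hint3 : Integrable (fun u : Fin p → ℝ =>
      ∑ i, ∑ j, B i j * (u i * u j * Real.exp (-(u ⬝ᵥ u) / 2))) :=
    integrable_finset_sum _ (fun i _ => hint2 i)
  rw [MeasureTheory.integral_sub hint3 (E_integrable.const_mul _)]
  rw [MeasureTheory.integral_finset_sum _ (fun i _ => hint2 i)]
  have hsum : ∀ i : Fin p,
      ∫ u : Fin p → ℝ, ∑ j, B i j * (u i * u j * Real.exp (-(u ⬝ᵥ u) / 2))
        = B i i * Real.sqrt (2 * Real.pi) ^ p := by
    intro i
    rw [MeasureTheory.integral_finset_sum _ (fun j _ => hint1 i j)]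
    have : ∀ j : Fin p, ∫ u : Fin p → ℝ, B i j * (u i * u j * Real.exp (-(u ⬝ᵥ u) / 2))
        = if i = j then B i j * Real.sqrt (2 * Real.pi) ^ p else 0 := by
      intro j
      rw [integral_const_mul, J_val]
      by_cases h : i = j <;> simp [h]
    rw [Finset.sum_congr rfl (fun j _ => this j), Finset.sum_ite_eq _ i
      (fun j => B i j * Real.sqrt (2 * Real.pi) ^ p)]
    simp
  rw [Finset.sum_congr rfl (fun i _ => hsum i), integral_const_mul, E_val,
    ← Finset.sum_mul, Matrix.trace]
  simp [Matrix.diag]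

lemma dot_mulVec_mulVec (A B : Matrix (Fin p) (Fin p) ℝ) (u : Fin p → ℝ) :
    (A *ᵥ u) ⬝ᵥ (B *ᵥ u) = u ⬝ᵥ ((Aᵀ * B) *ᵥ u) := by
  symm
  rw [Matrix.dotProduct_mulVec, ← Matrix.vecMul_vecMul, Matrix.vecMul_transpose,
    ← Matrix.dotProduct_mulVec]

lemma integral_phi_zero (μ : Fin p → ℝ) (Cov S : Matrix (Fin p) (Fin p) ℝ)
    (hCovpd : Cov.PosDef) :
    ∫ x, gaussDens μ Cov x *
        (-(1 / 2) * (S * Cov).trace + (1 / 2) * ((x - μ) ⬝ᵥ (S *ᵥ (x - μ)))) = 0 := by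
  set F : (Fin p → ℝ) → ℝ := fun x => gaussDens μ Cov x *
      (-(1 / 2) * (S * Cov).trace + (1 / 2) * ((x - μ) ⬝ᵥ (S *ᵥ (x - μ)))) with hF
  obtain ⟨R, hRherm, hRR⟩ :
      ∃ R : Matrix (Fin p) (Fin p) ℝ, Rᵀ = R ∧ R * R = Cov := by
    have hsq : ∃ X : Matrix (Fin p) (Fin p) ℝ, IsSelfAdjoint X ∧
        QuasispectrumRestricts X ContinuousMap.realToNNReal ∧ X * X = Cov := by
      open scoped MatrixOrder in
      exact CFC.exists_sqrt_of_isSelfAdjoint_of_quasispectrumRestricts hCovpd.isHermitian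
        (QuasispectrumRestricts.nnreal_of_nonneg hCovpd.posSemidef.nonneg)
    obtain ⟨X, hX, -, hXX⟩ := hsq
    refine ⟨X, ?_, hXX⟩
    rw [← Matrix.conjTranspose_eq_transpose_of_trivial]
    exact hX
  have hdetR : R.det ≠ 0 := by
    intro h
    have : Cov.det = 0 := by rw [← hRR, Matrix.det_mul, h, mul_zero]
    exact ne_of_gt hCovpd.det_pos this
  have hRunit : IsUnit R.det := isUnit_iff_ne_zero.2 hdetR
  -- translation
  have htrans : ∫ x, F x = ∫ y, F (y + μ) := (integral_add_right_eq_self F μ).symm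
  -- linear change of variables
  have hinv : Invertible R := R.invertibleOfIsUnitDet hRunit
  let le : (Fin p → ℝ) ≃ₗ[ℝ] (Fin p → ℝ) := Matrix.toLinearEquiv' R hinv
  let e : (Fin p → ℝ) ≃ᵐ (Fin p → ℝ) :=
    le.toContinuousLinearEquiv.toHomeomorph.toMeasurableEquiv
  have he : ∀ u, e u = R *ᵥ u := fun u => rfl
  have hmap : Measure.map e volume = ENNReal.ofReal |(R.det)⁻¹| • volume := by
    have : (⇑e : (Fin p → ℝ) → (Fin p → ℝ)) = ⇑(Matrix.toLin' R) := rfl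
    rw [show (⇑e : (Fin p → ℝ) → (Fin p → ℝ)) = ⇑(Matrix.toLin' R) from rfl]
    exact Real.map_matrix_volume_pi_eq_smul_volume_pi hdetR
  have hcv : ∫ u, F (R *ᵥ u + μ) = |(R.det)⁻¹| * ∫ y, F (y + μ) := by
    have h1 : ∫ u, F (e u + μ) = ∫ y, F (y + μ) ∂(Measure.map e volume) :=
      (integral_map_equiv e (fun y => F (y + μ))).symm
    simp only [he] at h1
    rw [h1, hmap, integral_smul_measure, ENNReal.toReal_ofReal (abs_nonneg _), smul_eq_mul]
  -- compute F (R *ᵥ u + μ)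
  have hRCovR : R * Cov⁻¹ * R = 1 := by
    have hCovinv : Cov⁻¹ = R⁻¹ * R⁻¹ := by rw [← hRR, Matrix.mul_inv_rev]
    rw [hCovinv, ← Matrix.mul_assoc, Matrix.mul_nonsing_inv R hRunit, Matrix.one_mul,
      Matrix.nonsing_inv_mul R hRunit]
  have hFval : ∀ u : Fin p → ℝ, F (R *ᵥ u + μ)
      = ((2 * Real.pi) ^ (-(p : ℝ) / 2) * Cov.det ^ (-(1:ℝ) / 2) * (1/2))
        * (Real.exp (-(u ⬝ᵥ u) / 2) * (u ⬝ᵥ ((R * (S * R)) *ᵥ u) - (R * (S * R)).trace)) := by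
    intro u
    have hx : R *ᵥ u + μ - μ = R *ᵥ u := by abel
    have h1 : (R *ᵥ u) ⬝ᵥ (Cov⁻¹ *ᵥ (R *ᵥ u)) = u ⬝ᵥ u := by
      rw [Matrix.mulVec_mulVec, dot_mulVec_mulVec, hRherm, ← Matrix.mul_assoc, hRCovR,
        Matrix.one_mulVec]
    have h2 : (R *ᵥ u) ⬝ᵥ (S *ᵥ (R *ᵥ u)) = u ⬝ᵥ ((R * (S * R)) *ᵥ u) := by
      rw [Matrix.mulVec_mulVec, dot_mulVec_mulVec, hRherm]
    have h3 : (S * Cov).trace = (R * (S * R)).trace := by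
      rw [← hRR, ← Matrix.mul_assoc, Matrix.trace_mul_comm (S * R) R]
    rw [hF]
    simp only [gaussDens, hx, h1, h2, h3]
    ring
  have hzero : ∫ u : Fin p → ℝ, F (R *ᵥ u + μ) = 0 := by
    rw [integral_congr_ae (Filter.Eventually.of_forall hFval), integral_const_mul,
      gauss_moment, mul_zero]
  rw [htrans]
  rw [hzero] at hcv
  have habs : |(R.det)⁻¹| ≠ 0 := by
    simp [abs_eq_zero, hdetR]
  rcases mul_eq_zero.mp hcv.symm with h | h
  · exact absurd h habs
  · exact h


end Aux

/-- for `N(μ, Σ)`, a symmetric solution `S` of the Sylvester equation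
`SΣ + ΣS = M` yields the Wasserstein score function
`Φ(x) = −tr(SΣ)/2 + (x−μ)ᵀS(x−μ)/2` of the covariance parameter in direction `M`:
`E_q[Φ] = 0` and `A(∇ₓΦ)(x) = tr S − (x−μ)ᵀSΣ⁻¹(x−μ)
= tr(Σ⁻¹M)/2 − (x−μ)ᵀΣ⁻¹MΣ⁻¹(x−μ)/2 = −(d/dt)|₀ log q_{μ,Σ+tM}(x)`. -/
theorem stmt13 {p : ℕ} (μ : Fin p → ℝ) (Cov M S : Matrix (Fin p) (Fin p) ℝ)
    (hCovsym : Cov.IsSymm) (hCovpd : Cov.PosDef) (hMsym : M.IsSymm) (hSsym : S.IsSymm)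
    (hSyl : S * Cov + Cov * S = M) :
    (∫ x, gaussDens μ Cov x *
        (-(1 / 2) * (S * Cov).trace + (1 / 2) * ((x - μ) ⬝ᵥ (S *ᵥ (x - μ)))) = 0)
    ∧ ∀ x : Fin p → ℝ,
        (stein (gaussDens μ Cov)
            (fun y => gradv (fun z =>
              -(1 / 2) * (S * Cov).trace + (1 / 2) * ((z - μ) ⬝ᵥ (S *ᵥ (z - μ)))) y) x
          = S.trace - (x - μ) ⬝ᵥ ((S * Cov⁻¹) *ᵥ (x - μ)))
        ∧ (S.trace - (x - μ) ⬝ᵥ ((S * Cov⁻¹) *ᵥ (x - μ))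
          = (1 / 2) * (Cov⁻¹ * M).trace
            - (1 / 2) * ((x - μ) ⬝ᵥ ((Cov⁻¹ * M * Cov⁻¹) *ᵥ (x - μ))))
        ∧ ((1 / 2) * (Cov⁻¹ * M).trace
            - (1 / 2) * ((x - μ) ⬝ᵥ ((Cov⁻¹ * M * Cov⁻¹) *ᵥ (x - μ)))
          = - deriv (fun t : ℝ => Real.log (gaussDens μ (Cov + t • M) x)) 0) := by
  exact ⟨integral_phi_zero μ Cov S hCovpd,
    fun x => ⟨stein_eq μ Cov S hCovsym hCovpd hSsym x,
      algebra_eq Cov M S hCovsym hCovpd hSsym hSyl x μ,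
      deriv_log_gauss μ Cov M hCovpd x⟩⟩
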